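/- Let a₀, a₁ ∈ ℝ³ be unit vectors with a₀ × a₁ ≠ 0, and let s ∈ ℝ³ satisfy a₀·s = A₀ and a₁·s = A₁. Set t = s·(a₀ × a₁). Then ‖s‖ ≤ 1 if and only if t² ≤ (1 − A₀²)(1 − A₁²) − (a₀·a₁ − A₀·A₁)². -/

import Mathlib

noncomputable section
open scoped ComplexOrder

/-- Euclidean 3-space, the home of Bloch vectors and measurement directions. -/
abbrev E3 := EuclideanSpace ℝ (Fin 3)

/-- The standard inner product on ℝ³. -/
def dot (a b : E3) : ℝ := inner ℝ a b

/-- The cross product on ℝ³. -/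
def cross3 (a b : E3) : E3 :=
  (WithLp.equiv 2 (Fin 3 → ℝ)).symm
    ![a 1 * b 2 - a 2 * b 1, a 2 * b 0 - a 0 * b 2, a 0 * b 1 - a 1 * b 0]

lemma dot_eq (a b : E3) : dot a b = a 0 * b 0 + a 1 * b 1 + a 2 * b 2 := by
  simp [dot, PiLp.inner_apply, RCLike.inner_apply, Fin.sum_univ_three, mul_comm]

lemma cross3_apply (a b : E3) (i : Fin 3) :
    cross3 a b i = ![a 1 * b 2 - a 2 * b 1, a 2 * b 0 - a 0 * b 2,
      a 0 * b 1 - a 1 * b 0] i := rfl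

/-- Gram determinant identity for the triple product. -/
lemma key (a b s : E3) :
    dot s (cross3 a b) ^ 2 =
      dot a a * (dot b b * dot s s - dot b s ^ 2)
        - dot a b * (dot a b * dot s s - dot a s * dot b s)
        + dot a s * (dot a b * dot b s - dot b b * dot a s) := by
  simp only [dot_eq, cross3_apply]
  simp [Fin.isValue, Matrix.cons_val_zero, Matrix.cons_val_one, Matrix.head_cons]
  ring

/-- The residual parameter t = s·(a₀×a₁) is bounded exactly by the uncertainty
expression: ‖s‖ ≤ 1 iff t² ≤ (1−A₀²)(1−A₁²) − (a₀·a₁ − A₀A₁)². -/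
theorem residual_parameter_bound (a₀ a₁ s : E3)
    (ha₀ : ‖a₀‖ = 1) (ha₁ : ‖a₁‖ = 1) (hne : cross3 a₀ a₁ ≠ 0)
    (A₀ A₁ : ℝ) (hA₀ : dot a₀ s = A₀) (hA₁ : dot a₁ s = A₁) :
    ‖s‖ ≤ 1 ↔
      dot s (cross3 a₀ a₁) ^ 2
        ≤ (1 - A₀ ^ 2) * (1 - A₁ ^ 2) - (dot a₀ a₁ - A₀ * A₁) ^ 2 := by
  have haa : dot a₀ a₀ = 1 := by
    have := real_inner_self_eq_norm_sq a₀
    simp [dot, this, ha₀]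
  have hbb : dot a₁ a₁ = 1 := by
    have := real_inner_self_eq_norm_sq a₁
    simp [dot, this, ha₁]
  have hss : dot s s = ‖s‖ ^ 2 := by
    simpa [dot] using real_inner_self_eq_norm_sq s
  have hsym : dot a₁ s = dot s a₁ := real_inner_comm _ _
  -- positivity of 1 - c²:
  have hnn : 0 < dot (cross3 a₀ a₁) (cross3 a₀ a₁) := by
    have h1 : dot (cross3 a₀ a₁) (cross3 a₀ a₁) = ‖cross3 a₀ a₁‖ ^ 2 := by
      simpa [dot] using real_inner_self_eq_norm_sq (cross3 a₀ a₁)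
    rw [h1]
    exact pow_pos (norm_pos_iff.mpr hne) 2
  have hlag : dot (cross3 a₀ a₁) (cross3 a₀ a₁)
      = dot a₀ a₀ * dot a₁ a₁ - dot a₀ a₁ ^ 2 := by
    simp only [dot_eq, cross3_apply]
    simp [Fin.isValue, Matrix.cons_val_zero, Matrix.cons_val_one, Matrix.head_cons]
    ring
  have hc : dot a₀ a₁ ^ 2 < 1 := by
    rw [hlag, haa, hbb] at hnn; linarith
  have hk := key a₀ a₁ s
  rw [haa, hbb, hA₀, hA₁, hss] at hk
  have hns : 0 ≤ ‖s‖ := norm_nonneg s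
  constructor
  · intro h
    have h2 : ‖s‖ ^ 2 ≤ 1 := by nlinarith
    nlinarith
  · intro h
    have h2 : ‖s‖ ^ 2 ≤ 1 := by nlinarith
    nlinarith
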